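/- Suppose f : {0,1}^{2n} → {0,1} is monotone with Φ_f(1) ≥ λ for some λ ≥ 1/n. Then there exists γ = γ(λ) > 0 (independent of n) such that E_π[Φ_g(π(1))] ≥ γ, where π : [2n] → [n] is a uniformly random 2-to-1 function and g is the minor of f with respect to π. -/

import Mathlib

open Finset

/-- A Boolean function on subsets of `Fin m` is monotone. -/
def MonotoneB {m : ℕ} (f : Finset (Fin m) → Bool) : Prop :=
  ∀ S T : Finset (Fin m), S ⊆ T → f S = true → f T = true

/-- The boundary of coordinate `i`: sets `S` not containing `i` with
`f (S ∪ {i}) = 1` and `f S = 0`. -/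
def boundary {m : ℕ} (f : Finset (Fin m) → Bool) (i : Fin m) : Finset (Finset (Fin m)) :=
  Finset.univ.filter (fun S => i ∉ S ∧ f (insert i S) = true ∧ f S = false)

/-- `mu f i j` : the fraction of size-`j` subsets of `[m] \ {i}` lying in the
boundary of coordinate `i`. -/
def mu {m : ℕ} (f : Finset (Fin m) → Bool) (i : Fin m) (j : ℕ) : ℚ :=
  (((boundary f i).filter (fun S => S.card = j)).card : ℚ) / (((m - 1).choose j : ℕ) : ℚ)

/-- The Shapley value of coordinate `i` of `f` : the probability over a uniformly
random permutation `σ` that `i` is the pivotal coordinate on the increasing path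
`∅ = P₀ ⊂ P₁ ⊂ ⋯ ⊂ Pₘ = univ` given by `σ`. -/
def shapley {m : ℕ} (f : Finset (Fin m) → Bool) (i : Fin m) : ℚ :=
  (((Finset.univ : Finset (Equiv.Perm (Fin m))).filter (fun σ =>
    ∃ j : Fin m, σ j = i ∧
      f ((Finset.univ.filter (fun k => k < j)).image (fun k => σ k)) = false ∧
      f ((Finset.univ.filter (fun k => k ≤ j)).image (fun k => σ k)) = true)).card : ℚ)
    / ((Nat.factorial m : ℕ) : ℚ)

/-- `g` is the minor of `f` with respect to `π`. -/
def minorOf {m k : ℕ} (g : Finset (Fin k) → Bool) (f : Finset (Fin m) → Bool)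
    (π : Fin m → Fin k) : Prop :=
  ∀ S : Finset (Fin k), g S = f (Finset.univ.filter (fun i => π i ∈ S))

/-- The minor of `f` with respect to `π`, as a function. -/
def minorFun {m k : ℕ} (f : Finset (Fin m) → Bool) (π : Fin m → Fin k) :
    Finset (Fin k) → Bool :=
  fun S => f (Finset.univ.filter (fun i => π i ∈ S))

/-- The set of 2-to-1 maps `π : [2n] → [n]`. -/
def twoToOneMaps (n : ℕ) : Finset (Fin (2*n) → Fin n) :=
  Finset.univ.filter (fun π =>
    ∀ i : Fin n, (Finset.univ.filter (fun j => π j = i)).card = 2)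

namespace TTO
variable {n : ℕ}

def p (n : ℕ) : Fin (2*n) → Fin n := fun j => ⟨j.1/2, by have := j.2; omega⟩

def fl (n : ℕ) : Fin (2*n) → Fin (2*n) :=
  fun j => ⟨2*(j.1/2) + (1 - j.1 % 2), by have := j.2; omega⟩

lemma p_fl (j : Fin (2*n)) : p n (fl n j) = p n j := by
  simp [p, fl, Fin.ext_iff]; omega

lemma fl_fl (j : Fin (2*n)) : fl n (fl n j) = j := by
  simp [fl, Fin.ext_iff]; omega

lemma fl_ne (j : Fin (2*n)) : fl n j ≠ j := by
  simp [fl, Fin.ext_iff]; omega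

lemma pair_eq (x y : Fin (2*n)) : p n x = p n y ↔ (x = y ∨ x = fl n y) := by
  simp [p, fl, Fin.ext_iff]; omega

/-- the map defined by `ε : Fin n → Bool`, flipping within pair `i` iff `ε i`. -/
def rho (ε : Fin n → Bool) : Equiv.Perm (Fin (2*n)) :=
  Function.Involutive.toPerm (fun j => if ε (p n j) then fl n j else j) (by
    intro j
    by_cases h : ε (p n j) = true
    · simp only [h, if_true, p_fl, h, if_true, fl_fl]
    · simp only [Bool.not_eq_true] at h
      simp [h])

lemma rho_apply (ε : Fin n → Bool) (j : Fin (2*n)) :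
    rho ε j = if ε (p n j) then fl n j else j := rfl

def dd (n : ℕ) (i : Fin n) : Fin (2*n) := ⟨2*i.1, by have := i.2; omega⟩

lemma p_dd (i : Fin n) : p n (dd n i) = i := by
  simp [p, dd, Fin.ext_iff]

lemma eta_eq (η : Equiv.Perm (Fin (2*n))) (hη : ∀ j, p n (η j) = p n j) (j : Fin (2*n)) :
    (if decide (η (dd n (p n j)) ≠ dd n (p n j)) = true then fl n j else j) = η j := by
  generalize hd : dd n (p n j) = d
  have hpd : p n d = p n j := by rw [← hd]; exact p_dd _
  have hjd : j = d ∨ j = fl n d := (pair_eq j d).mp hpd.symm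
  have hηj : η j = j ∨ η j = fl n j := (pair_eq (η j) j).mp (hη j)
  by_cases hb : η d = d
  · simp only [hb, ne_eq, not_true_eq_false, decide_false, Bool.false_eq_true, if_false]
    rcases hjd with h | h
    · rw [h, hb]
    · rcases hηj with h2 | h2
      · exact h2.symm
      · exfalso
        have : η j = η d := by rw [h2, h, fl_fl, hb]
        have := η.injective this
        rw [h] at this
        exact fl_ne d this
  · have hb' : η d = fl n d := ((pair_eq (η d) d).mp (hη d)).resolve_left hb
    simp only [ne_eq, hb, not_false_eq_true, decide_true, if_true]
    rcases hjd with h | h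
    · rw [h, hb']
    · rcases hηj with h2 | h2
      · exfalso
        have : η j = η d := by rw [h2, h, hb']
        have := η.injective this
        rw [h] at this
        exact fl_ne d this
      · exact h2.symm

lemma card_stab :
    ((univ : Finset (Equiv.Perm (Fin (2*n)))).filter
      (fun η => ∀ j, p n (η j) = p n j)).card = 2^n := by
  have h2 : ((univ : Finset (Fin n → Bool))).card = 2^n := by
    simp [Finset.card_univ]
  rw [← h2]
  apply Finset.card_bij' (fun η _ => fun i => decide (η (dd n i) ≠ dd n i))
    (fun ε _ => rho ε)
  · intro η hη
    exact mem_univ _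
  · intro ε _
    simp only [mem_filter, mem_univ, true_and]
    intro j
    rw [rho_apply]
    by_cases h : ε (p n j) = true
    · simp [h, p_fl]
    · simp only [Bool.not_eq_true] at h; simp [h]
  · intro η hη
    simp only [mem_filter, mem_univ, true_and] at hη
    apply Equiv.ext
    intro j
    rw [rho_apply]
    exact eta_eq η hη j
  · intro ε _
    funext i
    have h1 : p n (dd n i) = i := p_dd i
    rw [rho_apply, h1]
    by_cases h : ε i = true
    · simp [h, fl_ne]
    · simp only [Bool.not_eq_true] at h; simp [h]
lemma exists_lift (q : Fin (2*n) → Fin n)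
    (hq : ∀ i, (univ.filter (fun j => q j = i)).card = 2) :
    ∃ σ : Equiv.Perm (Fin (2*n)), ∀ j, p n (σ j) = q j := by
  have hne : ∀ i : Fin n, (univ.filter (fun j => q j = i)).Nonempty := by
    intro i
    rw [← Finset.card_pos, hq i]; omega
  set a : Fin n → Fin (2*n) := fun i => (univ.filter (fun j => q j = i)).min' (hne i) with ha
  have hmem : ∀ i, a i ∈ univ.filter (fun j => q j = i) := fun i => Finset.min'_mem _ _
  have hqa : ∀ i, q (a i) = i := by
    intro i
    have := hmem i
    simp only [mem_filter] at this
    exact this.2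
  set f0 : Fin (2*n) → Fin (2*n) := fun j =>
    if j = a (q j) then ⟨2*(q j).1, by have := (q j).2; omega⟩
    else ⟨2*(q j).1+1, by have := (q j).2; omega⟩ with hf0
  have hp : ∀ j, p n (f0 j) = q j := by
    intro j
    simp only [hf0]
    split <;> simp [p, Fin.ext_iff] <;> omega
  have hinj : Function.Injective f0 := by
    intro j j' h
    have hqq : q j = q j' := by rw [← hp j, ← hp j', h]
    simp only [hf0, hqq] at h
    by_cases h1 : j = a (q j') <;> by_cases h2 : j' = a (q j')
    · exact h1.trans h2.symm
    · rw [if_pos h1, if_neg h2] at h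
      exfalso
      simp only [Fin.mk.injEq] at h
      omega
    · rw [if_neg (hqq ▸ h1), if_pos h2] at h
      exfalso
      simp only [Fin.mk.injEq] at h
      omega
    · -- both in fiber, both ≠ min'; fiber has card 2
      obtain ⟨u, v, huv, hs⟩ := Finset.card_eq_two.mp (hq (q j'))
      have hju : j ∈ univ.filter (fun x => q x = q j') := by simp [hqq]
      have hj'u : j' ∈ univ.filter (fun x => q x = q j') := by simp
      have hau : a (q j') ∈ univ.filter (fun x => q x = q j') := hmem _
      rw [hs] at hju hj'u hau
      simp only [mem_insert, mem_singleton] at hju hj'u hau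
      have h1' : j ≠ a (q j') := hqq ▸ h1
      rcases hau with hh | hh <;> rcases hju with g1 | g1 <;> rcases hj'u with g2 | g2 <;>
        first
          | exact g1.trans g2.symm
          | exact absurd (g1.trans hh.symm) h1'
          | exact absurd (g2.trans hh.symm) h2
  obtain ⟨σ, hσ⟩ : ∃ σ : Equiv.Perm (Fin (2*n)), ∀ j, σ j = f0 j :=
    ⟨Equiv.ofBijective f0 (Finite.injective_iff_bijective.mp hinj), fun j => rfl⟩
  exact ⟨σ, fun j => by rw [hσ j]; exact hp j⟩

lemma card_fiber (q : Fin (2*n) → Fin n)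
    (hq : ∀ i, (univ.filter (fun j => q j = i)).card = 2) :
    ((univ : Finset (Equiv.Perm (Fin (2*n)))).filter
      (fun σ => ∀ j, p n (σ j) = q j)).card = 2^n := by
  obtain ⟨σ0, hσ0⟩ := exists_lift q hq
  rw [← card_stab (n := n)]
  apply Finset.card_bij' (fun σ _ => σ0.symm.trans σ) (fun η _ => σ0.trans η)
  · intro σ hσ
    simp only [mem_filter, mem_univ, true_and] at hσ ⊢
    intro j
    have : p n (σ0 (σ0.symm j)) = q (σ0.symm j) := hσ0 _
    rw [Equiv.apply_symm_apply] at this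
    simpa [Equiv.trans_apply, hσ (σ0.symm j)] using (hσ (σ0.symm j)).trans this.symm
  · intro η hη
    simp only [mem_filter, mem_univ, true_and] at hη ⊢
    intro j
    have := hη (σ0 j)
    simpa [Equiv.trans_apply, this] using this.trans (hσ0 j)
  · intro σ _; ext j; simp
  · intro η _; ext j; simp

lemma card_fiber_symm (q : Fin (2*n) → Fin n)
    (hq : ∀ i, (univ.filter (fun j => q j = i)).card = 2) :
    ((univ : Finset (Equiv.Perm (Fin (2*n)))).filter
      (fun σ => ∀ j, p n (σ.symm j) = q j)).card = 2^n := by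
  rw [← card_fiber q hq]
  apply Finset.card_bij' (fun σ _ => σ.symm) (fun σ _ => σ.symm)
  · intro σ _; simp
  · intro σ _; simp
  · intro σ hσ
    simp only [mem_filter, mem_univ, true_and] at hσ ⊢
    exact hσ
  · intro σ hσ
    simp only [mem_filter, mem_univ, true_and] at hσ ⊢
    simpa using hσ

end TTO

open TTO

def pivSet {m : ℕ} (h : Finset (Fin m) → Bool) (i : Fin m) : Finset (Equiv.Perm (Fin m)) :=
  (Finset.univ : Finset (Equiv.Perm (Fin m))).filter (fun σ =>
    ∃ j : Fin m, σ j = i ∧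
      h ((Finset.univ.filter (fun k => k < j)).image (fun k => σ k)) = false ∧
      h ((Finset.univ.filter (fun k => k ≤ j)).image (fun k => σ k)) = true)

lemma shapley_eq {m : ℕ} (h : Finset (Fin m) → Bool) (i : Fin m) :
    shapley h i = ((pivSet h i).card : ℚ) / ((Nat.factorial m : ℕ) : ℚ) := rfl

def Bset (n : ℕ) (f : Finset (Fin (2*n)) → Bool) (e0 : Fin (2*n)) :
    Finset (Equiv.Perm (Fin (2*n))) :=
  Finset.univ.filter (fun σ =>
    f ((Finset.univ.filter (fun s => p n s < p n (σ.symm e0))).image (fun s => σ s)) = false ∧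
    f ((Finset.univ.filter (fun s => p n s ≤ p n (σ.symm e0))).image (fun s => σ s)) = true)

lemma p_fiber_card {n : ℕ} (i : Fin n) :
    ((Finset.univ : Finset (Fin (2*n))).filter (fun j => p n j = i)).card = 2 := by
  have hset : (Finset.univ : Finset (Fin (2*n))).filter (fun j => p n j = i)
      = {dd n i, fl n (dd n i)} := by
    ext j
    simp only [Finset.mem_filter, Finset.mem_univ, true_and, Finset.mem_insert,
      Finset.mem_singleton]
    have h1 : (p n j = i) ↔ (p n j = p n (dd n i)) := by rw [p_dd]
    rw [h1, pair_eq]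
  rw [hset, Finset.card_pair (Ne.symm (fl_ne (dd n i)))]

lemma perm_fiber_card {n : ℕ} (σ : Equiv.Perm (Fin (2*n))) (τ : Equiv.Perm (Fin n))
    (i : Fin n) :
    ((Finset.univ : Finset (Fin (2*n))).filter
      (fun j => τ (p n (σ.symm j)) = i)).card = 2 := by
  have h1 : ((Finset.univ : Finset (Fin (2*n))).filter (fun j => τ (p n (σ.symm j)) = i))
      = (Finset.univ.filter (fun j => p n j = τ.symm i)).image (fun j => σ j) := by
    ext j
    simp only [Finset.mem_filter, Finset.mem_univ, true_and, Finset.mem_image]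
    constructor
    · intro h
      rw [Equiv.apply_eq_iff_eq_symm_apply] at h
      exact ⟨σ.symm j, h, by simp⟩
    · rintro ⟨x, hx, rfl⟩
      rw [Equiv.symm_apply_apply, hx, Equiv.apply_symm_apply]
  rw [h1, Finset.card_image_of_injective _ (fun a b h => σ.injective h), p_fiber_card]

lemma mem_twoToOneMaps_iff {n : ℕ} (π : Fin (2*n) → Fin n) :
    π ∈ twoToOneMaps n ↔
      ∀ i : Fin n, (Finset.univ.filter (fun j => π j = i)).card = 2 := by
  simp [twoToOneMaps]

/-- key equivalence: for compatible `(σ, τ, π)`, pivotality of `τ` for the minor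
equals the pair-flip condition on `σ`. -/
lemma piv_iff_B {n : ℕ} (f : Finset (Fin (2*n)) → Bool) (e0 : Fin (2*n))
    (σ : Equiv.Perm (Fin (2*n))) (τ : Equiv.Perm (Fin n)) (π : Fin (2*n) → Fin n)
    (hcomp : ∀ j, τ (p n (σ.symm j)) = π j) :
    (τ ∈ pivSet (minorFun f π) (π e0)) ↔ σ ∈ Bset n f e0 := by
  have hset : ∀ (P : Fin n → Prop) (inst : DecidablePred P),
      Finset.univ.filter (fun i => π i ∈ (Finset.univ.filter P).image (fun k => τ k))
        = (Finset.univ.filter (fun s => P (p n s))).image (fun s => σ s) := by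
    intro P inst
    ext i
    simp only [Finset.mem_filter, Finset.mem_univ, true_and, Finset.mem_image]
    constructor
    · rintro ⟨k, ⟨hk, hτk⟩⟩
      refine ⟨σ.symm i, ?_, by simp⟩
      have heq : τ k = τ (p n (σ.symm i)) := by rw [hτk, ← hcomp i]
      have heq2 := τ.injective heq
      exact heq2 ▸ hk
    · rintro ⟨s, hs, rfl⟩
      refine ⟨p n s, hs, ?_⟩
      rw [← hcomp (σ s), Equiv.symm_apply_apply]
  have hπe0 : π e0 = τ (p n (σ.symm e0)) := (hcomp e0).symm
  constructor
  · intro hτ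
    simp only [pivSet, Finset.mem_filter, Finset.mem_univ, true_and] at hτ
    obtain ⟨j, hj, h1, h2⟩ := hτ
    have hjk : j = p n (σ.symm e0) := τ.injective (by rw [hj, hπe0])
    subst hjk
    simp only [minorFun] at h1 h2
    rw [hset (fun k => k < p n (σ.symm e0)) _] at h1
    rw [hset (fun k => k ≤ p n (σ.symm e0)) _] at h2
    simp only [Bset, Finset.mem_filter, Finset.mem_univ, true_and]
    exact ⟨h1, h2⟩
  · intro hσ
    simp only [Bset, Finset.mem_filter, Finset.mem_univ, true_and] at hσ
    simp only [pivSet, Finset.mem_filter, Finset.mem_univ, true_and]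
    refine ⟨p n (σ.symm e0), hπe0.symm, ?_, ?_⟩
    · simp only [minorFun]
      rw [hset (fun k => k < p n (σ.symm e0)) _]
      exact hσ.1
    · simp only [minorFun]
      rw [hset (fun k => k ≤ p n (σ.symm e0)) _]
      exact hσ.2

lemma pivSet_subset_Bset {n : ℕ} (f : Finset (Fin (2*n)) → Bool) (hf : MonotoneB f)
    (e0 : Fin (2*n)) : pivSet f e0 ⊆ Bset n f e0 := by
  intro σ hσ
  simp only [pivSet, Finset.mem_filter, Finset.mem_univ, true_and] at hσ
  obtain ⟨j, hj, h1, h2⟩ := hσ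
  have hjs : σ.symm e0 = j := by rw [← hj, Equiv.symm_apply_apply]
  simp only [Bset, Finset.mem_filter, Finset.mem_univ, true_and, hjs]
  constructor
  · -- f on smaller set is false
    have hsub : (Finset.univ.filter (fun s => p n s < p n j)).image (fun s => σ s)
        ⊆ (Finset.univ.filter (fun k => k < j)).image (fun k => σ k) := by
      apply Finset.image_subset_image
      intro s hs
      simp only [Finset.mem_filter, Finset.mem_univ, true_and] at hs ⊢
      rw [Fin.lt_def] at hs ⊢
      simp only [p] at hs
      omega
    by_contra hc
    simp only [Bool.not_eq_false] at hc
    rw [hf _ _ hsub hc] at h1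
    exact absurd h1 (by simp)
  · -- f on larger set is true
    have hsub : (Finset.univ.filter (fun k => k ≤ j)).image (fun k => σ k)
        ⊆ (Finset.univ.filter (fun s => p n s ≤ p n j)).image (fun s => σ s) := by
      apply Finset.image_subset_image
      intro s hs
      simp only [Finset.mem_filter, Finset.mem_univ, true_and] at hs ⊢
      rw [Fin.le_def] at hs ⊢
      simp only [p] at hs ⊢
      omega
    exact hf _ _ hsub h2

lemma key_count {n : ℕ} (f : Finset (Fin (2*n)) → Bool) (e0 : Fin (2*n)) :
    (∑ π ∈ twoToOneMaps n, (pivSet (minorFun f π) (π e0)).card) * 2^n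
      = (Bset n f e0).card * n.factorial := by
  classical
  have hcard : ((Bset n f e0) ×ˢ (Finset.univ : Finset (Equiv.Perm (Fin n)))).card
      = (Bset n f e0).card * n.factorial := by
    rw [Finset.card_product, Finset.card_univ, Fintype.card_perm, Fintype.card_fin]
  rw [← hcard]
  rw [Finset.card_eq_sum_card_fiberwise
    (f := fun x : Equiv.Perm (Fin (2*n)) × Equiv.Perm (Fin n) =>
      ((fun j => x.2 (p n (x.1.symm j)), x.2) : (Fin (2*n) → Fin n) × Equiv.Perm (Fin n)))
    (t := (twoToOneMaps n) ×ˢ (Finset.univ : Finset (Equiv.Perm (Fin n))))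
    (by
      intro x hx
      rw [Finset.mem_coe, Finset.mem_product]
      exact ⟨(mem_twoToOneMaps_iff _).mpr (fun i => perm_fiber_card x.1 x.2 i),
        Finset.mem_univ _⟩)]
  rw [Finset.sum_product, Finset.sum_mul]
  apply Finset.sum_congr rfl
  intro π hπ
  symm
  have hπ2 := (mem_twoToOneMaps_iff π).mp hπ
  have hfib : ∀ τ : Equiv.Perm (Fin n),
      (((Bset n f e0) ×ˢ (Finset.univ : Finset (Equiv.Perm (Fin n)))).filter
        (fun x => ((fun j => x.2 (p n (x.1.symm j)), x.2)
          : (Fin (2*n) → Fin n) × Equiv.Perm (Fin n)) = (π, τ))).card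
      = if τ ∈ pivSet (minorFun f π) (π e0) then 2^n else 0 := by
    intro τ
    have hstep : (((Bset n f e0) ×ˢ (Finset.univ : Finset (Equiv.Perm (Fin n)))).filter
        (fun x => ((fun j => x.2 (p n (x.1.symm j)), x.2)
          : (Fin (2*n) → Fin n) × Equiv.Perm (Fin n)) = (π, τ))).card
        = ((Bset n f e0).filter (fun σ => ∀ j, τ (p n (σ.symm j)) = π j)).card := by
      refine Finset.card_bij' (fun x _ => x.1) (fun σ _ => (σ, τ)) ?_ ?_ ?_ ?_
      · intro x hx
        simp only [Finset.mem_filter, Finset.mem_product, Prod.mk.injEq] at hx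
        obtain ⟨⟨hB, -⟩, hfun, hτ⟩ := hx
        simp only [Finset.mem_filter]
        refine ⟨hB, fun j => ?_⟩
        rw [← hτ]
        exact congrFun hfun j
      · intro σ hσ
        simp only [Finset.mem_filter] at hσ
        simp only [Finset.mem_filter, Finset.mem_product, Prod.mk.injEq]
        exact ⟨⟨hσ.1, Finset.mem_univ _⟩, funext hσ.2, trivial⟩
      · intro x hx
        simp only [Finset.mem_filter, Finset.mem_product, Prod.mk.injEq] at hx
        exact Prod.ext rfl hx.2.2.symm
      · intro σ _
        rfl
    rw [hstep]
    by_cases hA : τ ∈ pivSet (minorFun f π) (π e0)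
    · rw [if_pos hA]
      have hBfull : (Bset n f e0).filter (fun σ => ∀ j, τ (p n (σ.symm j)) = π j)
          = Finset.univ.filter (fun σ => ∀ j, p n (σ.symm j) = τ.symm (π j)) := by
        ext σ
        simp only [Finset.mem_filter, Finset.mem_univ, true_and]
        constructor
        · rintro ⟨-, hcomp⟩ j
          rw [← hcomp j, Equiv.symm_apply_apply]
        · intro hcomp
          have hcomp' : ∀ j, τ (p n (σ.symm j)) = π j := by
            intro j; rw [hcomp j, Equiv.apply_symm_apply]
          exact ⟨(piv_iff_B f e0 σ τ π hcomp').mp hA, hcomp'⟩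
      rw [hBfull]
      apply card_fiber_symm
      intro i
      have : (Finset.univ.filter (fun j : Fin (2*n) => τ.symm (π j) = i))
          = Finset.univ.filter (fun j => π j = τ i) := by
        ext j
        simp [Equiv.symm_apply_eq]
      rw [this]
      exact hπ2 (τ i)
    · rw [if_neg hA]
      rw [Finset.card_eq_zero]
      rw [Finset.filter_eq_empty_iff]
      intro σ hσB
      intro hcomp'
      have hcomp : ∀ j, τ (p n (σ.symm j)) = π j := hcomp'
      exact hA ((piv_iff_B f e0 σ τ π hcomp).mpr hσB)
  calc ∑ τ : Equiv.Perm (Fin n),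
        (((Bset n f e0) ×ˢ (Finset.univ : Finset (Equiv.Perm (Fin n)))).filter
          (fun x => ((fun j => x.2 (p n (x.1.symm j)), x.2)
            : (Fin (2*n) → Fin n) × Equiv.Perm (Fin n)) = (π, τ))).card
      = ∑ τ : Equiv.Perm (Fin n),
          (if τ ∈ pivSet (minorFun f π) (π e0) then 2^n else 0) := by
        apply Finset.sum_congr rfl
        intro τ _
        exact hfib τ
    _ = (pivSet (minorFun f π) (π e0)).card * 2^n := by
        rw [Finset.sum_ite_mem, Finset.univ_inter, Finset.sum_const, smul_eq_mul]

lemma fact_count (n : ℕ) : (2*n).factorial = (twoToOneMaps n).card * 2^n := by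
  classical
  have h1 : ((Finset.univ : Finset (Equiv.Perm (Fin (2*n))))).card = (2*n).factorial := by
    rw [Finset.card_univ, Fintype.card_perm, Fintype.card_fin]
  rw [← h1]
  rw [Finset.card_eq_sum_card_fiberwise
    (f := fun σ : Equiv.Perm (Fin (2*n)) => (fun j => p n (σ.symm j) : Fin (2*n) → Fin n))
    (t := twoToOneMaps n)
    (by
      intro σ _
      exact (mem_twoToOneMaps_iff _).mpr (fun i => by
        have := perm_fiber_card σ (Equiv.refl (Fin n)) i
        exact this))]
  rw [Finset.sum_congr rfl (fun q hq => ?_), Finset.sum_const, smul_eq_mul]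
  have hq2 := (mem_twoToOneMaps_iff q).mp hq
  have : (Finset.univ.filter (fun σ : Equiv.Perm (Fin (2*n)) =>
      (fun j => p n (σ.symm j)) = q)) = Finset.univ.filter
      (fun σ : Equiv.Perm (Fin (2*n)) => ∀ j, p n (σ.symm j) = q j) := by
    ext σ
    simp [funext_iff]
  rw [this]
  exact card_fiber_symm q hq2

/-- If `Φ_f(1) ≥ λ ≥ 1/n`, then for a uniformly random 2-to-1 minor `g` of `f`,
`E_π[Φ_g(π(1))] ≥ γ` for some `γ(λ) > 0` independent of `n`. -/
theorem expected_shapley_random_two_to_one (lam : ℚ) : ∃ γ : ℚ, 0 < γ ∧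
    ∀ (n : ℕ) (hn : 0 < n) (f : Finset (Fin (2*n)) → Bool),
      MonotoneB f → lam ≤ shapley f ⟨0, by omega⟩ → 1 / (n : ℚ) ≤ lam →
      γ ≤ (∑ π ∈ twoToOneMaps n, shapley (minorFun f π) (π ⟨0, by omega⟩)) /
            (((twoToOneMaps n).card : ℕ) : ℚ) := by
  refine ⟨if 0 < lam then lam else 1, ?_, ?_⟩
  · split_ifs with h
    · exact h
    · exact one_pos
  · intro n hn f hmono hlam hnlam
    have hnQ : (0:ℚ) < (n:ℚ) := by exact_mod_cast hn
    have hl : 0 < lam := lt_of_lt_of_le (by positivity) hnlam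
    rw [if_pos hl]
    set e0 : Fin (2*n) := ⟨0, by omega⟩ with he0
    set T := twoToOneMaps n with hT
    set Sc := ∑ π ∈ T, (pivSet (minorFun f π) (π e0)).card with hSc
    set Bc := (Bset n f e0).card with hBc
    set Afc := (pivSet f e0).card with hAfc
    have hkey : Sc * 2^n = Bc * n.factorial := key_count f e0
    have hfact : (2*n).factorial = T.card * 2^n := fact_count n
    have hsub : Afc ≤ Bc := Finset.card_le_card (pivSet_subset_Bset f hmono e0)
    have hf2n : (0:ℚ) < ((2*n).factorial : ℚ) := by
      exact_mod_cast Nat.factorial_pos (2*n)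
    have h2pow : (0:ℚ) < (2:ℚ)^n := by positivity
    have hnfac : (0:ℚ) < (n.factorial : ℚ) := by exact_mod_cast Nat.factorial_pos n
    have hTpos : (0:ℚ) < (T.card : ℚ) := by
      have : T.card ≠ 0 := by
        intro h0
        have := hfact
        rw [h0] at this
        simp at this
        exact absurd this (Nat.factorial_ne_zero _)
      exact_mod_cast Nat.pos_of_ne_zero this
    have hkeyQ : (Sc : ℚ) * 2^n = (Bc : ℚ) * (n.factorial : ℚ) := by
      exact_mod_cast congrArg (fun x : ℕ => (x : ℚ)) hkey
    have hfactQ : (((2*n).factorial : ℕ) : ℚ) = (T.card : ℚ) * 2^n := by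
      exact_mod_cast congrArg (fun x : ℕ => (x : ℚ)) hfact
    have hlamQ : lam * (((2*n).factorial : ℕ) : ℚ) ≤ (Afc : ℚ) := by
      rw [shapley_eq] at hlam
      exact (le_div_iff₀ hf2n).mp hlam
    have hsum : ∑ π ∈ T, shapley (minorFun f π) (π e0)
        = (Sc : ℚ) / (n.factorial : ℚ) := by
      rw [hSc, Nat.cast_sum, Finset.sum_div]
      apply Finset.sum_congr rfl
      intro π _
      rw [shapley_eq]
    rw [hsum, div_div, le_div_iff₀ (by positivity)]
    have hmul : lam * ((n.factorial : ℚ) * (T.card : ℚ)) * 2^n ≤ (Sc : ℚ) * 2^n := by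
      calc lam * ((n.factorial : ℚ) * (T.card : ℚ)) * 2^n
          = (lam * (((2*n).factorial : ℕ) : ℚ)) * (n.factorial : ℚ) := by
            rw [hfactQ]; ring
        _ ≤ (Afc : ℚ) * (n.factorial : ℚ) :=
            mul_le_mul_of_nonneg_right hlamQ (le_of_lt hnfac)
        _ ≤ (Bc : ℚ) * (n.factorial : ℚ) := by
            have : (Afc : ℚ) ≤ (Bc : ℚ) := by exact_mod_cast hsub
            exact mul_le_mul_of_nonneg_right this (le_of_lt hnfac)
        _ = (Sc : ℚ) * 2^n := hkeyQ.symm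
    exact le_of_mul_le_mul_right hmul h2pow
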